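/- Let π = (n_1,…,n_m) (m ≥ 2) be a partition of n, 0 < ρ ≤ 1, and O ∈ O(P_m). If μ is a constant such that ‖J‖₂ ≤ μ for all block Jacobi operators J ∈ J_O^{UBC_π(ρ)}, then ‖J̃‖₂ ≤ μ for all J̃ ∈ J_{O^←}^{UBC_π(ρ)}, where O^← is the reverse sequence and ‖·‖₂ is the spectral norm. The assertion also holds when, in both occurrences, the spectral norm is replaced by the spectral radius. -/

import Mathlib

namespace BlockJacobi

open scoped BigOperators

attribute [local instance] Classical.propDecidable

noncomputable section

/-- Offset (starting index) of block `r` for the partition `c`. -/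
def off (c : ℕ → ℕ) (r : ℕ) : ℕ := ∑ k ∈ Finset.range r, c k

/-- `t` belongs to block `r`. -/
def inBlk (c : ℕ → ℕ) (r t : ℕ) : Prop := off c r ≤ t ∧ t < off c r + c r

/-- `s` and `t` belong to the same block (among the first `m` blocks). -/
def sameBlk (c : ℕ → ℕ) (m s t : ℕ) : Prop := ∃ r, r < m ∧ inBlk c r s ∧ inBlk c r t

/-- `t` belongs to the pivot zone: block `i` or block `j`. -/
def inPiv (c : ℕ → ℕ) (i j t : ℕ) : Prop := inBlk c i t ∨ inBlk c j t

/-- `(c, m)` is a partition of `n` into `m` blocks (0-based blocks `0,…,m-1`). -/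
def IsPartition (n m : ℕ) (c : ℕ → ℕ) : Prop :=
  2 ≤ m ∧ (∀ i < m, 1 ≤ c i) ∧ ∑ i ∈ Finset.range m, c i = n

/-- elementary block matrix with (0-based) pivot pair `(i,j)`. -/
def IsElem {n : ℕ} (c : ℕ → ℕ) (i j : ℕ) (U : Matrix (Fin n) (Fin n) ℝ) : Prop :=
  ∀ s t : Fin n, ¬(inPiv c i j (s : ℕ) ∧ inPiv c i j (t : ℕ)) →
    U s t = if s = t then 1 else 0

/-- orthogonality. -/
def Orth {n : ℕ} (U : Matrix (Fin n) (Fin n) ℝ) : Prop := U.transpose * U = 1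

/-- Euclidean norm of a vector. -/
def enorm {ι : Type*} [Fintype ι] (x : ι → ℝ) : ℝ := Real.sqrt (∑ i, x i ^ 2)

/-- smallest singular value of the `(r,r)` diagonal block of `U`. -/
def sigmaMinBlk {n : ℕ} (c : ℕ → ℕ) (r : ℕ) (U : Matrix (Fin n) (Fin n) ℝ) : ℝ :=
  sInf { v : ℝ | ∃ x : Fin n → ℝ,
    (∀ t : Fin n, ¬ inBlk c r (t : ℕ) → x t = 0) ∧ enorm x = 1 ∧
    enorm (fun t : Fin n => if inBlk c r (t : ℕ) then U.mulVec x t else 0) = v }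

/-- the constant `γ_{ij}` of the UBC class. -/
def gammaUBC (c : ℕ → ℕ) (i j : ℕ) : ℝ :=
  3 / Real.sqrt (((4 : ℝ) ^ c i + 6 * (c j : ℝ) - 1) * ((c j : ℝ) + 1))

/-- `U` is in the UBC class with pivot pair `(i,j)`: block structure given by `cs`,
`γ`-bound computed from the partition `cg`. -/
def IsUBC2 {n : ℕ} (cs cg : ℕ → ℕ) (ρ : ℝ) (i j : ℕ) (U : Matrix (Fin n) (Fin n) ℝ) : Prop :=
  IsElem cs i j U ∧ Orth U ∧ sigmaMinBlk cs i U = sigmaMinBlk cs j U ∧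
    ρ * gammaUBC cg i j ≤ sigmaMinBlk cs i U

/-- `U ∈ UBC_π(ρ)` with pivot pair `(i,j)`. -/
def IsUBC {n : ℕ} (c : ℕ → ℕ) (ρ : ℝ) (i j : ℕ) (U : Matrix (Fin n) (Fin n) ℝ) : Prop :=
  IsUBC2 c c ρ i j U

/-- the `(i,j)` pivot submatrix of `A` is diagonal. -/
def PivDiag {n : ℕ} (c : ℕ → ℕ) (i j : ℕ) (A : Matrix (Fin n) (Fin n) ℝ) : Prop :=
  ∀ s t : Fin n, s ≠ t → inPiv c i j (s : ℕ) → inPiv c i j (t : ℕ) → A s t = 0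

/-- square of the off-norm `S(A)`. -/
def offSq {n : ℕ} (A : Matrix (Fin n) (Fin n) ℝ) : ℝ :=
  ∑ s : Fin n, ∑ t : Fin n, if (s : ℕ) < (t : ℕ) then A s t ^ 2 else 0

/-- square of the off-norm of the `(i,j)` pivot submatrix of `A`. -/
def offSqPiv {n : ℕ} (c : ℕ → ℕ) (i j : ℕ) (A : Matrix (Fin n) (Fin n) ℝ) : ℝ :=
  ∑ s : Fin n, ∑ t : Fin n,
    if (s : ℕ) < (t : ℕ) ∧ inPiv c i j (s : ℕ) ∧ inPiv c i j (t : ℕ) then A s t ^ 2 else 0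

/-- Frobenius norm. -/
def frob {n : ℕ} (A : Matrix (Fin n) (Fin n) ℝ) : ℝ :=
  Real.sqrt (∑ s : Fin n, ∑ t : Fin n, A s t ^ 2)

/-- One sweep of the block Jacobi method along the pivot list `L`; block structure from
`cs`, UBC bound computed from the partition `cg`. -/
def Sweep2 {n : ℕ} (cs cg : ℕ → ℕ) (ρ : ℝ) (L : List (ℕ × ℕ))
    (A A' : Matrix (Fin n) (Fin n) ℝ) : Prop :=
  ∃ B : ℕ → Matrix (Fin n) (Fin n) ℝ,
    B 0 = A ∧ B L.length = A' ∧
    ∀ (k : ℕ) (hk : k < L.length),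
      ∃ U : Matrix (Fin n) (Fin n) ℝ,
        IsUBC2 cs cg ρ (L.get ⟨k, hk⟩).1 (L.get ⟨k, hk⟩).2 U ∧
        B (k + 1) = U.transpose * B k * U ∧
        PivDiag cs (L.get ⟨k, hk⟩).1 (L.get ⟨k, hk⟩).2 (B (k + 1))

/-- One sweep of the block Jacobi method with `UBC_π(ρ)` transformations. -/
def Sweep {n : ℕ} (c : ℕ → ℕ) (ρ : ℝ) (L : List (ℕ × ℕ))
    (A A' : Matrix (Fin n) (Fin n) ℝ) : Prop :=
  Sweep2 c c ρ L A A'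

/-- `L ∈ O(P_m)` (0-based pairs). -/
def SeqOn (m : ℕ) (L : List (ℕ × ℕ)) : Prop :=
  (∀ p ∈ L, p.1 < p.2 ∧ p.2 < m) ∧ ∀ i j : ℕ, i < j → j < m → (i, j) ∈ L

/-- `L ∈ O(S)` for `S ⊆ P_m`. -/
def SeqOnSet (S : Set (ℕ × ℕ)) (L : List (ℕ × ℕ)) : Prop :=
  (∀ p ∈ L, p ∈ S) ∧ ∀ p ∈ S, p ∈ L

/-- the class `B_c^(m)` of column-wise orderings (0-based). -/
def memBc (m : ℕ) (L : List (ℕ × ℕ)) : Prop :=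
  ∃ τ : ℕ → ℕ → ℕ,
    (∀ j, Set.BijOn (τ j) (Set.Iio j) (Set.Iio j)) ∧
    L = (List.range' 1 (m - 1)).flatMap fun j => (List.range j).map fun a => (τ j a, j)

/-- the class `B_r^(m)` of row-wise orderings (0-based). -/
def memBr (m : ℕ) (L : List (ℕ × ℕ)) : Prop :=
  ∃ σ : ℕ → ℕ → ℕ,
    (∀ i, Set.BijOn (σ i) (Set.Ico (i + 1) m) (Set.Ico (i + 1) m)) ∧
    L = ((List.range (m - 1)).reverse).flatMap fun i =>
      (List.range' (i + 1) (m - 1 - i)).map fun b => (i, σ i b)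

/-- the class `B_sp^(m)` of serial orderings with permutations. -/
def memBsp (m : ℕ) (L : List (ℕ × ℕ)) : Prop :=
  memBc m L ∨ memBc m L.reverse ∨ memBr m L ∨ memBr m L.reverse

/-- the quasi-cyclic class `B̄_c^(m)`. -/
def memBcQ (m : ℕ) (L : List (ℕ × ℕ)) : Prop :=
  ∃ (τ : ℕ → ℕ → ℕ) (E : ℕ → List (ℕ × ℕ)),
    (∀ j, Set.BijOn (τ j) (Set.Iio j) (Set.Iio j)) ∧
    (∀ j, ∀ p ∈ E j, p.1 < p.2 ∧ p.2 ≤ j) ∧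
    L = (List.range' 1 (m - 1)).flatMap fun j =>
      ((List.range j).map fun a => (τ j a, j)) ++ (if j = 1 then [] else E j)

/-- one admissible transposition (on lists of `α`'s carrying pairs via `pr`). -/
def AdjSwapG {α : Type*} (pr : α → ℕ × ℕ) (L L' : List α) : Prop :=
  ∃ (l₁ l₂ : List α) (a b : α),
    ({(pr a).1, (pr a).2} ∩ {(pr b).1, (pr b).2} : Set ℕ) = ∅ ∧
    L = l₁ ++ a :: b :: l₂ ∧ L' = l₁ ++ b :: a :: l₂

/-- equivalence (finitely many admissible transpositions). -/
def EquivG {α : Type*} (pr : α → ℕ × ℕ) : List α → List α → Prop :=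
  Relation.ReflTransGen (AdjSwapG pr)

/-- shift-equivalence. -/
def ShiftG {α : Type*} (L L' : List α) : Prop :=
  ∃ l₁ l₂ : List α, L = l₁ ++ l₂ ∧ L' = l₂ ++ l₁

/-- weak equivalence. -/
def WeakG {α : Type*} (pr : α → ℕ × ℕ) : List α → List α → Prop :=
  Relation.ReflTransGen fun X Y => EquivG pr X Y ∨ ShiftG X Y

/-- equivalence of pivot sequences. -/
def PEquivL : List (ℕ × ℕ) → List (ℕ × ℕ) → Prop := EquivG id

/-- shift-equivalence of pivot sequences. -/
def ShiftEq : List (ℕ × ℕ) → List (ℕ × ℕ) → Prop := ShiftG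

/-- weak equivalence of pivot sequences. -/
def WeakEq : List (ℕ × ℕ) → List (ℕ × ℕ) → Prop := WeakG id

/-- weak equivalence realized by a chain containing exactly `d` shift-equivalent
adjacent pairs (all other adjacent pairs being equivalent). -/
def WeakChainD (d : ℕ) (L L' : List (ℕ × ℕ)) : Prop :=
  ∃ (r : ℕ) (cs : ℕ → List (ℕ × ℕ)) (s : Finset ℕ),
    cs 0 = L ∧ cs r = L' ∧ s.card = d ∧ (∀ k ∈ s, k < r) ∧
    ∀ k < r, if k ∈ s then ShiftEq (cs k) (cs (k + 1)) else PEquivL (cs k) (cs (k + 1))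

/-- `q` is a permutation of `{0,…,m-1}`. -/
def IsPermOn (m : ℕ) (q : ℕ → ℕ) : Prop := Set.BijOn q (Set.Iio m) (Set.Iio m)

/-- `O(q)`: apply a permutation to all pairs of the sequence. -/
def pApply (q : ℕ → ℕ) (L : List (ℕ × ℕ)) : List (ℕ × ℕ) :=
  L.map fun p => if q p.1 < q p.2 then (q p.1, q p.2) else (q p.2, q p.1)

/-- `compSeq q t = q_t ∘ q_{t-1} ∘ ⋯ ∘ q_1`. -/
def compSeq (q : ℕ → ℕ → ℕ) : ℕ → ℕ → ℕ
  | 0 => id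
  | t + 1 => q (t + 1) ∘ compSeq q t

/-- the class `B_spg^(m)`. -/
def memBspg (m : ℕ) (L : List (ℕ × ℕ)) : Prop :=
  ∃ L' L'' : List (ℕ × ℕ), memBsp m L'' ∧
    ((∃ q, IsPermOn m q ∧ L' = pApply q L) ∧ PEquivL L' L'' ∨
      PEquivL L L' ∧ ∃ q, IsPermOn m q ∧ L'' = pApply q L')

/-- the class `B_sg^(m)` of generalized serial orderings. -/
def memBsg (m : ℕ) (L : List (ℕ × ℕ)) : Prop :=
  ∃ L' L'' : List (ℕ × ℕ), memBsp m L'' ∧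
    ((∃ q, IsPermOn m q ∧ L' = pApply q L) ∧ WeakEq L' L'' ∨
      WeakEq L L' ∧ ∃ q, IsPermOn m q ∧ L'' = pApply q L')

/-- index set of the entries of the off-diagonal blocks in the upper triangle;
it has cardinality `K`. -/
def OffI (n m : ℕ) (c : ℕ → ℕ) : Type :=
  { p : Fin n × Fin n // (p.1 : ℕ) < (p.2 : ℕ) ∧ ¬ sameBlk c m (p.1 : ℕ) (p.2 : ℕ) }

instance (n m : ℕ) (c : ℕ → ℕ) : Fintype (OffI n m c) := by
  unfold OffI; exact Subtype.fintype _

instance (n m : ℕ) (c : ℕ → ℕ) : DecidableEq (OffI n m c) := Classical.decEq _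

/-- `vec_{π,0}⁻¹` : the symmetric matrix with zero diagonal blocks built from a vector. -/
def symOf {n m : ℕ} {c : ℕ → ℕ} (a : OffI n m c → ℝ) : Matrix (Fin n) (Fin n) ℝ :=
  fun s t =>
    if h : (s : ℕ) < (t : ℕ) ∧ ¬ sameBlk c m (s : ℕ) (t : ℕ) then a ⟨(s, t), h⟩
    else if h' : (t : ℕ) < (s : ℕ) ∧ ¬ sameBlk c m (t : ℕ) (s : ℕ) then a ⟨(t, s), h'⟩
    else 0

/-- `N_{ij}` : set the pivot submatrix to zero. -/
def nij {n : ℕ} (c : ℕ → ℕ) (i j : ℕ) (M : Matrix (Fin n) (Fin n) ℝ) :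
    Matrix (Fin n) (Fin n) ℝ :=
  fun s t => if inPiv c i j (s : ℕ) ∧ inPiv c i j (t : ℕ) then 0 else M s t

/-- the block Jacobi annihilator `R_{ij}(Û)` (as a `K×K` matrix), parametrized by the
full elementary block matrix `U` with pivot pair `(i,j)` and pivot submatrix `Û`. -/
def annih (n m : ℕ) (c : ℕ → ℕ) (i j : ℕ) (U : Matrix (Fin n) (Fin n) ℝ) :
    Matrix (OffI n m c) (OffI n m c) ℝ :=
  fun p q => nij c i j (U.transpose * symOf (Pi.single q (1 : ℝ)) * U) p.1.1 p.1.2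

/-- the class `I_{ij}` of block Jacobi annihilators. -/
def Iij (n m : ℕ) (c : ℕ → ℕ) (i j : ℕ) : Set (Matrix (OffI n m c) (OffI n m c) ℝ) :=
  { R | ∃ U : Matrix (Fin n) (Fin n) ℝ, IsElem c i j U ∧ Orth U ∧ R = annih n m c i j U }

/-- the class `I_{ij}^{UBC(ρ)}`. -/
def IijUBC (n m : ℕ) (c : ℕ → ℕ) (ρ : ℝ) (i j : ℕ) :
    Set (Matrix (OffI n m c) (OffI n m c) ℝ) :=
  { R | ∃ U : Matrix (Fin n) (Fin n) ℝ, IsUBC c ρ i j U ∧ R = annih n m c i j U }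

/-- the class `J_O^{UBC_π(ρ)}` of block Jacobi operators. -/
def JopUBC (n m : ℕ) (c : ℕ → ℕ) (ρ : ℝ) (L : List (ℕ × ℕ)) :
    Set (Matrix (OffI n m c) (OffI n m c) ℝ) :=
  { J | ∃ R : ℕ → Matrix (OffI n m c) (OffI n m c) ℝ,
      (∀ (k : ℕ) (hk : k < L.length),
        R k ∈ IijUBC n m c ρ (L.get ⟨k, hk⟩).1 (L.get ⟨k, hk⟩).2) ∧
      J = (((List.range L.length).reverse).map R).prod }

/-- spectral norm (operator 2-norm). -/
def specNorm {ι : Type*} [Fintype ι] (M : Matrix ι ι ℝ) : ℝ :=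
  sSup { v : ℝ | ∃ x : ι → ℝ, enorm x = 1 ∧ enorm (M.mulVec x) = v }

/-- spectral radius. -/
def specRad {ι : Type*} [Fintype ι] (M : Matrix ι ι ℝ) : ℝ :=
  sSup { v : ℝ | ∃ (μ : ℂ) (x : ι → ℂ), x ≠ 0 ∧
    (M.map (fun r : ℝ => (r : ℂ))).mulVec x = μ • x ∧ v = ‖μ‖ }

/-- product `R_{T-1} ⋯ R_1 R_0` of a decorated pivot list. -/
def prodD {n m : ℕ} {c : ℕ → ℕ}
    (L : List ((ℕ × ℕ) × Matrix (OffI n m c) (OffI n m c) ℝ)) :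
    Matrix (OffI n m c) (OffI n m c) ℝ :=
  ((L.map Prod.snd).reverse).prod

/-- plane (Givens) rotation in the `(i,j)` coordinate plane. -/
def rotM (n : ℕ) (i j : ℕ) (φ : ℝ) : Matrix (Fin n) (Fin n) ℝ :=
  fun s t =>
    if (s : ℕ) = i ∧ (t : ℕ) = i then Real.cos φ
    else if (s : ℕ) = j ∧ (t : ℕ) = j then Real.cos φ
    else if (s : ℕ) = i ∧ (t : ℕ) = j then - Real.sin φ
    else if (s : ℕ) = j ∧ (t : ℕ) = i then Real.sin φ
    else if s = t then 1 else 0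

/-- One sweep of the scalar (element-wise) cyclic Jacobi method with rotation
angles in `[-π/4, π/4]`. -/
def ScalarSweep {n : ℕ} (L : List (ℕ × ℕ)) (A A' : Matrix (Fin n) (Fin n) ℝ) : Prop :=
  ∃ (B : ℕ → Matrix (Fin n) (Fin n) ℝ) (φ : ℕ → ℝ),
    B 0 = A ∧ B L.length = A' ∧
    ∀ (k : ℕ) (hk : k < L.length),
      |φ k| ≤ Real.pi / 4 ∧
      B (k + 1) =
        (rotM n (L.get ⟨k, hk⟩).1 (L.get ⟨k, hk⟩).2 (φ k)).transpose * B k *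
          rotM n (L.get ⟨k, hk⟩).1 (L.get ⟨k, hk⟩).2 (φ k) ∧
      ∀ s t : Fin n, (s : ℕ) = (L.get ⟨k, hk⟩).1 → (t : ℕ) = (L.get ⟨k, hk⟩).2 →
        B (k + 1) s t = 0

/-- `k` concatenated copies of a list. -/
def iterList {α : Type*} : ℕ → List α → List α
  | 0, _ => []
  | k + 1, L => L ++ iterList k L

/-! ### Auxiliary lemmas for Statement 18 -/

section Aux

variable {ι : Type*} [Fintype ι]

lemma enorm_nonneg (x : ι → ℝ) : 0 ≤ enorm x := Real.sqrt_nonneg _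

lemma enorm_eq_norm (x : ι → ℝ) : enorm x = ‖(WithLp.equiv 2 (ι → ℝ)).symm x‖ := by
  rw [EuclideanSpace.norm_eq]
  simp [enorm, Real.norm_eq_abs, sq_abs, WithLp.equiv_symm_apply, PiLp.toLp_apply]

lemma enorm_eq_zero {x : ι → ℝ} : enorm x = 0 ↔ x = 0 := by
  rw [enorm_eq_norm, norm_eq_zero]
  constructor
  · intro h; have := congrArg (WithLp.equiv 2 (ι → ℝ)) h; simpa using this
  · intro h; rw [h]; rfl

lemma enorm_smul (cc : ℝ) (x : ι → ℝ) : enorm (cc • x) = |cc| * enorm x := by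
  rw [enorm_eq_norm, enorm_eq_norm]
  have : (WithLp.equiv 2 (ι → ℝ)).symm (cc • x) = cc • (WithLp.equiv 2 (ι → ℝ)).symm x := rfl
  rw [this, norm_smul, Real.norm_eq_abs]

lemma dot_le (x y : ι → ℝ) : dotProduct x y ≤ enorm x * enorm y := by
  have h := Finset.sum_mul_sq_le_sq_mul_sq Finset.univ x y
  have h2 : dotProduct x y ≤ |∑ i, x i * y i| := le_abs_self _
  calc dotProduct x y ≤ |∑ i, x i * y i| := h2
    _ = Real.sqrt ((∑ i, x i * y i) ^ 2) := (Real.sqrt_sq_eq_abs _).symm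
    _ ≤ Real.sqrt ((∑ i, x i ^ 2) * ∑ i, y i ^ 2) := Real.sqrt_le_sqrt h
    _ = enorm x * enorm y := by
        rw [Real.sqrt_mul (Finset.sum_nonneg fun i _ => sq_nonneg _)]; rfl

/-- the set whose supremum is the spectral norm. -/
def SV (M : Matrix ι ι ℝ) : Set ℝ :=
  { v : ℝ | ∃ x : ι → ℝ, enorm x = 1 ∧ enorm (M.mulVec x) = v }

lemma SV_nonneg {M : Matrix ι ι ℝ} {v : ℝ} (h : v ∈ SV M) : 0 ≤ v := by
  obtain ⟨x, -, rfl⟩ := h; exact enorm_nonneg _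

lemma SV_empty [IsEmpty ι] (M : Matrix ι ι ℝ) : SV M = ∅ := by
  ext v; simp only [SV, Set.mem_setOf_eq, Set.mem_empty_iff_false, iff_false]
  rintro ⟨x, hx, -⟩
  rw [enorm] at hx
  simp at hx

lemma exists_max [Nonempty ι] (M : Matrix ι ι ℝ) :
    ∃ x : ι → ℝ, enorm x = 1 ∧ ∀ y : ι → ℝ, enorm y = 1 →
      enorm (M.mulVec y) ≤ enorm (M.mulVec x) := by
  classical
  set E := EuclideanSpace ℝ ι
  have hmv : Continuous fun v : ι → ℝ => M.mulVec v := by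
    apply continuous_pi
    intro i
    simp only [Matrix.mulVec, dotProduct]
    exact continuous_finset_sum _ fun j _ => (continuous_const.mul (continuous_apply j))
  have hg : Continuous fun z : E => (WithLp.equiv 2 (ι → ℝ)).symm
      (M.mulVec (WithLp.equiv 2 (ι → ℝ) z)) := by
    exact (PiLp.continuous_toLp 2 (fun _ : ι => ℝ)).comp
      (hmv.comp (PiLp.continuous_ofLp 2 (fun _ : ι => ℝ)))
  have hf : Continuous fun z : E => ‖(WithLp.equiv 2 (ι → ℝ)).symm
      (M.mulVec (WithLp.equiv 2 (ι → ℝ) z))‖ := hg.norm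
  have hcs : IsCompact (Metric.sphere (0 : E) 1) := isCompact_sphere _ _
  have hne : (Metric.sphere (0 : E) 1).Nonempty := by
    refine ⟨EuclideanSpace.single (Classical.arbitrary ι) (1 : ℝ), ?_⟩
    simp only [Metric.mem_sphere, dist_zero_right]
    rw [EuclideanSpace.norm_single]
    norm_num
  obtain ⟨z, hz, hmax⟩ := hcs.exists_isMaxOn hne hf.continuousOn
  refine ⟨WithLp.equiv 2 (ι → ℝ) z, ?_, ?_⟩
  · rw [enorm_eq_norm]
    simpa using hz
  · intro y hy
    have hy' : (WithLp.equiv 2 (ι → ℝ)).symm y ∈ Metric.sphere (0 : E) 1 := by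
      simp only [Metric.mem_sphere, dist_zero_right]
      rw [enorm_eq_norm] at hy; exact hy
    have := hmax hy'
    simp only [Set.mem_setOf_eq, Equiv.apply_symm_apply] at this
    rw [enorm_eq_norm, enorm_eq_norm]
    exact this

lemma specNorm_eq_sSup_SV (M : Matrix ι ι ℝ) : specNorm M = sSup (SV M) := rfl

lemma specNorm_eq_max [Nonempty ι] (M : Matrix ι ι ℝ) :
    ∃ x : ι → ℝ, enorm x = 1 ∧ enorm (M.mulVec x) = specNorm M ∧
      ∀ y : ι → ℝ, enorm y = 1 → enorm (M.mulVec y) ≤ specNorm M := by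
  obtain ⟨x, hx, hmax⟩ := exists_max M
  have hmem : enorm (M.mulVec x) ∈ SV M := ⟨x, hx, rfl⟩
  have hbdd : BddAbove (SV M) := by
    refine ⟨enorm (M.mulVec x), ?_⟩
    rintro v ⟨y, hy, rfl⟩; exact hmax y hy
  have heq : specNorm M = enorm (M.mulVec x) := by
    rw [specNorm_eq_sSup_SV]
    refine le_antisymm (Real.sSup_le ?_ (enorm_nonneg _)) (le_csSup hbdd hmem)
    rintro v ⟨y, hy, rfl⟩; exact hmax y hy
  exact ⟨x, hx, heq.symm, fun y hy => heq ▸ hmax y hy⟩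

lemma specNorm_nonneg [Nonempty ι] (M : Matrix ι ι ℝ) : 0 ≤ specNorm M := by
  obtain ⟨x, hx, he, -⟩ := specNorm_eq_max M
  exact he ▸ enorm_nonneg _

lemma enorm_mulVec_le [Nonempty ι] (M : Matrix ι ι ℝ) (y : ι → ℝ) :
    enorm (M.mulVec y) ≤ specNorm M * enorm y := by
  obtain ⟨x, hx, he, hmax⟩ := specNorm_eq_max M
  rcases eq_or_ne y 0 with rfl | hy
  · simp only [Matrix.mulVec_zero]
    have : enorm (0 : ι → ℝ) = 0 := enorm_eq_zero.mpr rfl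
    rw [this, mul_zero]
  · have hpos : 0 < enorm y :=
      lt_of_le_of_ne (enorm_nonneg _) (fun h => hy (enorm_eq_zero.mp h.symm))
    set u := (enorm y)⁻¹ • y with hu
    have hun : enorm u = 1 := by
      rw [hu, enorm_smul, abs_of_pos (inv_pos.mpr hpos), inv_mul_cancel₀ hpos.ne']
    have := hmax u hun
    rw [hu, Matrix.mulVec_smul, enorm_smul, abs_of_pos (inv_pos.mpr hpos)] at this
    calc enorm (M.mulVec y) = enorm y * ((enorm y)⁻¹ * enorm (M.mulVec y)) := by
          field_simp
      _ ≤ enorm y * specNorm M := mul_le_mul_of_nonneg_left this hpos.le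
      _ = specNorm M * enorm y := mul_comm _ _

lemma enorm_sq_eq_dot (x : ι → ℝ) : enorm x ^ 2 = dotProduct x x := by
  rw [enorm, Real.sq_sqrt (Finset.sum_nonneg fun i _ => sq_nonneg _)]
  simp [dotProduct, sq]

lemma specNorm_transpose_le (M : Matrix ι ι ℝ) :
    specNorm M.transpose ≤ specNorm M := by
  classical
  cases isEmpty_or_nonempty ι with
  | inl h =>
      rw [specNorm_eq_sSup_SV, specNorm_eq_sSup_SV, SV_empty, SV_empty]
  | inr h =>
      rw [specNorm_eq_sSup_SV]
      refine Real.sSup_le ?_ (specNorm_nonneg M)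
      rintro v ⟨x, hx, rfl⟩
      set w := M.transpose.mulVec x with hw
      rcases eq_or_ne (enorm w) 0 with h0 | h0
      · rw [h0]; exact specNorm_nonneg M
      have key : enorm w ^ 2 ≤ specNorm M * enorm w := by
        have h1 : enorm w ^ 2 = dotProduct x (M.mulVec w) := by
          rw [enorm_sq_eq_dot]
          rw [hw, Matrix.mulVec_transpose, ← Matrix.dotProduct_mulVec]
        rw [h1]
        calc dotProduct x (M.mulVec w) ≤ enorm x * enorm (M.mulVec w) := dot_le _ _
          _ = enorm (M.mulVec w) := by rw [hx, one_mul]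
          _ ≤ specNorm M * enorm w := enorm_mulVec_le M w
      have hpos : 0 < enorm w := lt_of_le_of_ne (enorm_nonneg _) (Ne.symm h0)
      have key' : enorm w * enorm w ≤ specNorm M * enorm w := by
        calc enorm w * enorm w = enorm w ^ 2 := (sq _).symm
          _ ≤ specNorm M * enorm w := key
      exact le_of_mul_le_mul_right key' hpos

lemma sSup_SV_transpose (M : Matrix ι ι ℝ) : sSup (SV M.transpose) = sSup (SV M) := by
  refine le_antisymm (specNorm_transpose_le M) ?_
  have := specNorm_transpose_le M.transpose
  rwa [Matrix.transpose_transpose] at this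

lemma sInf_SV_inv [DecidableEq ι] [Nonempty ι] (M : Matrix ι ι ℝ) (hdet : IsUnit M.det) :
    sInf (SV M) = (sSup (SV M⁻¹))⁻¹ := by
  classical
  obtain ⟨y, hy, hty, hmax⟩ := specNorm_eq_max M⁻¹
  set t := specNorm M⁻¹ with ht
  have hMM : M * M⁻¹ = 1 := Matrix.mul_nonsing_inv M hdet
  have hMM' : M⁻¹ * M = 1 := Matrix.nonsing_inv_mul M hdet
  have hinvy : M⁻¹.mulVec y ≠ 0 := by
    intro h
    have : M.mulVec (M⁻¹.mulVec y) = y := by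
      rw [Matrix.mulVec_mulVec, hMM, Matrix.one_mulVec]
    rw [h, Matrix.mulVec_zero] at this
    rw [← this] at hy
    rw [enorm_eq_zero.mpr rfl] at hy
    norm_num at hy
  have htpos : 0 < t := by
    rw [← hty]
    exact lt_of_le_of_ne (enorm_nonneg _) (fun h => hinvy (enorm_eq_zero.mp h.symm))
  rw [← specNorm_eq_sSup_SV, ← ht]
  refine le_antisymm ?_ ?_
  · have hmem : t⁻¹ ∈ SV M := by
      refine ⟨t⁻¹ • M⁻¹.mulVec y, ?_, ?_⟩
      · rw [enorm_smul, hty, abs_of_pos (inv_pos.mpr htpos), ht, inv_mul_cancel₀ htpos.ne']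
      · rw [Matrix.mulVec_smul, Matrix.mulVec_mulVec, hMM, Matrix.one_mulVec,
          enorm_smul, hy, abs_of_pos (inv_pos.mpr htpos), mul_one]
    exact csInf_le ⟨0, fun v hv => SV_nonneg hv⟩ hmem
  · refine le_csInf ?_ ?_
    · obtain ⟨x, hx, -, -⟩ := specNorm_eq_max M
      exact ⟨enorm (M.mulVec x), x, hx, rfl⟩
    rintro v ⟨x, hx, rfl⟩
    set w := M.mulVec x with hwdef
    have hw : w ≠ 0 := by
      intro h
      have : M⁻¹.mulVec w = x := by
        rw [hwdef, Matrix.mulVec_mulVec, hMM', Matrix.one_mulVec]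
      rw [h, Matrix.mulVec_zero] at this
      rw [← this, enorm_eq_zero.mpr rfl] at hx
      norm_num at hx
    have hepos : 0 < enorm w :=
      lt_of_le_of_ne (enorm_nonneg _) (fun h => hw (enorm_eq_zero.mp h.symm))
    have hinv : M⁻¹.mulVec ((enorm w)⁻¹ • w) = (enorm w)⁻¹ • x := by
      rw [Matrix.mulVec_smul, hwdef, Matrix.mulVec_mulVec, hMM', Matrix.one_mulVec]
    have hunit : enorm ((enorm w)⁻¹ • w) = 1 := by
      rw [enorm_smul, abs_of_pos (inv_pos.mpr hepos), inv_mul_cancel₀ hepos.ne']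
    have hle : (enorm w)⁻¹ ≤ t := by
      have := hmax _ hunit
      rw [hinv, enorm_smul, hx, abs_of_pos (inv_pos.mpr hepos), mul_one] at this
      exact this
    calc t⁻¹ ≤ ((enorm w)⁻¹)⁻¹ := inv_anti₀ (inv_pos.mpr hepos) hle
      _ = enorm w := inv_inv _

lemma sInf_SV_transpose (M : Matrix ι ι ℝ) :
    sInf (SV M.transpose) = sInf (SV M) := by
  classical
  have main : ∀ N : Matrix ι ι ℝ, sInf (SV N.transpose) ≤ sInf (SV N) := by
    intro N
    cases isEmpty_or_nonempty ι with
    | inl h => rw [SV_empty, SV_empty]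
    | inr h =>
        by_cases hdet : IsUnit N.det
        · have hdet' : IsUnit N.transpose.det := by rwa [Matrix.det_transpose]
          rw [sInf_SV_inv N hdet, sInf_SV_inv N.transpose hdet',
            ← Matrix.transpose_nonsing_inv, sSup_SV_transpose]
        · have hdet0 : N.transpose.det = 0 := by
            rw [Matrix.det_transpose]
            rcases eq_or_ne N.det 0 with h0 | h0
            · exact h0
            · exact absurd (isUnit_iff_ne_zero.mpr h0) hdet
          obtain ⟨v, hv, hv0⟩ := (Matrix.exists_mulVec_eq_zero_iff).mpr hdet0
          have hepos : 0 < enorm v :=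
            lt_of_le_of_ne (enorm_nonneg _) (fun h => hv (enorm_eq_zero.mp h.symm))
          have hmem : (0 : ℝ) ∈ SV N.transpose := by
            refine ⟨(enorm v)⁻¹ • v, ?_, ?_⟩
            · rw [enorm_smul, abs_of_pos (inv_pos.mpr hepos), inv_mul_cancel₀ hepos.ne']
            · rw [Matrix.mulVec_smul, hv0, smul_zero, enorm_eq_zero.mpr rfl]
          have h1 : sInf (SV N.transpose) ≤ 0 :=
            csInf_le ⟨0, fun u hu => SV_nonneg hu⟩ hmem
          have h2 : (0:ℝ) ≤ sInf (SV N) := by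
            rcases Set.eq_empty_or_nonempty (SV N) with he | hne
            · rw [he]; simp [Real.sInf_empty]
            · exact le_csInf hne fun u hu => SV_nonneg hu
          linarith
  refine le_antisymm (main M) ?_
  have := main M.transpose
  rwa [Matrix.transpose_transpose] at this

/-- the set whose supremum is the spectral radius. -/
def RS (M : Matrix ι ι ℝ) : Set ℝ :=
  { v : ℝ | ∃ (μ : ℂ) (x : ι → ℂ), x ≠ 0 ∧
    (M.map (fun r : ℝ => (r : ℂ))).mulVec x = μ • x ∧ v = ‖μ‖ }

lemma specRad_eq_sSup_RS (M : Matrix ι ι ℝ) : specRad M = sSup (RS M) := rfl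

lemma RS_transpose_subset [DecidableEq ι] (M : Matrix ι ι ℝ) :
    RS M.transpose ⊆ RS M := by
  rintro v ⟨μ, x, hx, hev, rfl⟩
  set C := M.map (fun r : ℝ => (r : ℂ)) with hC
  have hCT : (M.transpose.map (fun r : ℝ => (r : ℂ))) = C.transpose := by
    rw [hC, Matrix.transpose_map]
  rw [hCT] at hev
  have hker : (C.transpose - μ • 1).mulVec x = 0 := by
    rw [Matrix.sub_mulVec, hev, Matrix.smul_mulVec, Matrix.one_mulVec, sub_self]
  have hdetT : (C.transpose - μ • 1).det = 0 := by
    rw [← Matrix.exists_mulVec_eq_zero_iff]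
    exact ⟨x, hx, hker⟩
  have htr : C.transpose - μ • 1 = (C - μ • 1).transpose := by
    rw [Matrix.transpose_sub, Matrix.transpose_smul, Matrix.transpose_one]
  have hdet : (C - μ • 1).det = 0 := by
    rw [← Matrix.det_transpose, ← htr]; exact hdetT
  obtain ⟨y, hy, hy0⟩ := Matrix.exists_mulVec_eq_zero_iff.mpr hdet
  refine ⟨μ, y, hy, ?_, rfl⟩
  rw [Matrix.sub_mulVec, Matrix.smul_mulVec, Matrix.one_mulVec, sub_eq_zero] at hy0
  exact hy0

lemma RS_transpose [DecidableEq ι] (M : Matrix ι ι ℝ) : RS M.transpose = RS M := by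
  refine le_antisymm (RS_transpose_subset M) ?_
  have := RS_transpose_subset M.transpose
  rwa [Matrix.transpose_transpose] at this

end Aux

section Struct

variable {n m : ℕ} {c : ℕ → ℕ}

lemma sum_subtype_block {nn : ℕ} {p : Fin nn → Prop} (g : Fin nn → ℝ)
    (hg : ∀ t, ¬ p t → g t = 0) :
    ∑ t : {t : Fin nn // p t}, g t.1 = ∑ t, g t := by
  classical
  rw [← Finset.sum_filter_add_sum_filter_not Finset.univ p g]
  have h2 : ∑ t ∈ Finset.univ.filter (fun t => ¬ p t), g t = 0 :=
    Finset.sum_eq_zero (fun t ht => hg t (Finset.mem_filter.mp ht).2)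
  rw [h2, add_zero]
  exact (Finset.sum_subtype _ (by intro t; simp) g).symm

lemma enorm_restrict {nn : ℕ} {p : Fin nn → Prop} (x : Fin nn → ℝ)
    (hx : ∀ t, ¬ p t → x t = 0) :
    enorm (fun t : {t : Fin nn // p t} => x t.1) = enorm x := by
  unfold enorm
  congr 1
  exact sum_subtype_block (fun t => x t ^ 2)
    (fun t ht => by show x t ^ 2 = 0; rw [hx t ht]; ring)

lemma enorm_proj {nn : ℕ} {p : Fin nn → Prop} (w : Fin nn → ℝ) :
    enorm (fun t : Fin nn => if p t then w t else 0)
      = enorm (fun t : {t : Fin nn // p t} => w t.1) := by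
  unfold enorm
  congr 1
  have h1 : ∑ t : {t : Fin nn // p t}, (if p t.1 then w t.1 else 0) ^ 2
      = ∑ t : Fin nn, (if p t then w t else 0) ^ 2 :=
    sum_subtype_block (fun t => (if p t then w t else 0) ^ 2)
      (fun t ht => by show (if p t then w t else 0) ^ 2 = 0; rw [if_neg ht]; ring)
  have h2 : ∑ t : {t : Fin nn // p t}, (if p t.1 then w t.1 else 0) ^ 2
      = ∑ t : {t : Fin nn // p t}, w t.1 ^ 2 :=
    Finset.sum_congr rfl (fun t _ => by rw [if_pos t.2])
  exact h1.symm.trans h2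

/-- the diagonal block of `U` at position `(r,r)`, as a matrix on a subtype. -/
def blkM (c : ℕ → ℕ) (r : ℕ) {nn : ℕ} (U : Matrix (Fin nn) (Fin nn) ℝ) :
    Matrix {t : Fin nn // inBlk c r (t : ℕ)} {t : Fin nn // inBlk c r (t : ℕ)} ℝ :=
  fun s t => U s.1 t.1

lemma blk_mulVec {nn : ℕ} (c : ℕ → ℕ) (r : ℕ) (U : Matrix (Fin nn) (Fin nn) ℝ)
    (x : Fin nn → ℝ) (hsupp : ∀ t : Fin nn, ¬ inBlk c r (t : ℕ) → x t = 0)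
    (s : {t : Fin nn // inBlk c r (t : ℕ)}) :
    (blkM c r U).mulVec (fun t : {t : Fin nn // inBlk c r (t : ℕ)} => x t.1) s
      = U.mulVec x s.1 := by
  unfold Matrix.mulVec dotProduct blkM
  exact sum_subtype_block (fun t => U s.1 t * x t)
    (fun t ht => by show U s.1 t * x t = 0; rw [hsupp t ht, mul_zero])

lemma sigmaMinBlk_eq_sInf_SV {nn : ℕ} (c : ℕ → ℕ) (r : ℕ) (U : Matrix (Fin nn) (Fin nn) ℝ) :
    sigmaMinBlk c r U = sInf (SV (blkM c r U)) := by
  unfold sigmaMinBlk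
  congr 1
  ext v
  constructor
  · rintro ⟨x, hsupp, hx1, rfl⟩
    refine ⟨fun t => x t.1, ?_, ?_⟩
    · rw [enorm_restrict x hsupp]; exact hx1
    · have hmv : (blkM c r U).mulVec (fun t : {t : Fin nn // inBlk c r (t : ℕ)} => x t.1)
          = fun s : {t : Fin nn // inBlk c r (t : ℕ)} => U.mulVec x s.1 :=
        funext fun s => blk_mulVec c r U x hsupp s
      rw [hmv, ← enorm_proj]
  · rintro ⟨y, hy1, rfl⟩
    set x : Fin nn → ℝ := fun t => if h : inBlk c r (t : ℕ) then y ⟨t, h⟩ else 0 with hxd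
    have hsupp : ∀ t : Fin nn, ¬ inBlk c r (t : ℕ) → x t = 0 := fun t ht => dif_neg ht
    have hxy : (fun t : {t : Fin nn // inBlk c r (t : ℕ)} => x t.1) = y := by
      funext t; exact dif_pos t.2
    refine ⟨x, hsupp, ?_, ?_⟩
    · rw [← enorm_restrict x hsupp, hxy]; exact hy1
    · have hmv : (blkM c r U).mulVec y
          = fun s : {t : Fin nn // inBlk c r (t : ℕ)} => U.mulVec x s.1 := by
        rw [← hxy]
        exact funext fun s => blk_mulVec c r U x hsupp s
      rw [enorm_proj, hmv]

lemma sigmaMinBlk_transpose {nn : ℕ} (c : ℕ → ℕ) (r : ℕ) (U : Matrix (Fin nn) (Fin nn) ℝ) :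
    sigmaMinBlk c r U.transpose = sigmaMinBlk c r U := by
  rw [sigmaMinBlk_eq_sInf_SV, sigmaMinBlk_eq_sInf_SV]
  have hb : blkM c r U.transpose = (blkM c r U).transpose := rfl
  rw [hb, sInf_SV_transpose]

lemma IsElem.transpose {nn : ℕ} {i j : ℕ} {U : Matrix (Fin nn) (Fin nn) ℝ}
    (hU : IsElem c i j U) : IsElem c i j U.transpose := by
  intro s t h
  have h' : ¬(inPiv c i j (t : ℕ) ∧ inPiv c i j (s : ℕ)) := fun hh => h ⟨hh.2, hh.1⟩
  have := hU t s h'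
  rw [Matrix.transpose_apply, this]
  by_cases hst : s = t
  · subst hst; simp
  · rw [if_neg hst, if_neg (fun hh => hst hh.symm)]

lemma Orth.transpose {nn : ℕ} {U : Matrix (Fin nn) (Fin nn) ℝ}
    (hU : Orth U) : Orth U.transpose := by
  unfold Orth at hU ⊢
  rw [Matrix.transpose_transpose]
  exact mul_eq_one_comm.mp hU

lemma IsUBC.transpose {i j : ℕ} {ρ : ℝ} {U : Matrix (Fin n) (Fin n) ℝ}
    (hU : IsUBC c ρ i j U) : IsUBC c ρ i j U.transpose := by
  obtain ⟨h1, h2, h3, h4⟩ := hU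
  exact ⟨h1.transpose, h2.transpose,
    by rw [sigmaMinBlk_transpose, sigmaMinBlk_transpose]; exact h3,
    by rw [sigmaMinBlk_transpose]; exact h4⟩

end Struct

section Annih

variable {n m : ℕ} {c : ℕ → ℕ}

lemma symOf_single_apply (q : OffI n m c) (s t : Fin n) :
    symOf (Pi.single q (1 : ℝ)) s t
      = (if s = q.1.1 ∧ t = q.1.2 then 1 else 0)
        + (if s = q.1.2 ∧ t = q.1.1 then 1 else 0) := by
  obtain ⟨⟨q1, q2⟩, hq⟩ := q
  have hlt : (q1 : ℕ) < (q2 : ℕ) := hq.1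
  by_cases h1 : s = q1 ∧ t = q2
  · obtain ⟨rfl, rfl⟩ := h1
    rw [if_pos ⟨rfl, rfl⟩, if_neg (by rintro ⟨rfl, -⟩; omega)]
    unfold symOf
    rw [dif_pos hq, add_zero]
    exact Pi.single_eq_same _ _
  · by_cases h2 : s = q2 ∧ t = q1
    · obtain ⟨rfl, rfl⟩ := h2
      rw [if_neg h1, if_pos ⟨rfl, rfl⟩]
      unfold symOf
      have hc1 : ¬((s : ℕ) < (t : ℕ) ∧ ¬ sameBlk c m (s : ℕ) (t : ℕ)) :=
        fun hh => absurd hh.1 (by omega)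
      rw [dif_neg hc1]
      have hsame : ¬ sameBlk c m ((t : Fin n) : ℕ) ((s : Fin n) : ℕ) := hq.2
      rw [dif_pos (⟨hlt, hsame⟩ : (t : ℕ) < (s : ℕ) ∧ ¬ sameBlk c m (t : ℕ) (s : ℕ)),
        zero_add]
      exact Pi.single_eq_same _ _
    · rw [if_neg h1, if_neg h2, add_zero]
      unfold symOf
      by_cases hc1 : (s : ℕ) < (t : ℕ) ∧ ¬ sameBlk c m (s : ℕ) (t : ℕ)
      · rw [dif_pos hc1]
        refine Pi.single_eq_of_ne (fun hh => h1 ?_) _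
        have := congrArg Subtype.val hh
        simpa [Prod.ext_iff] using this
      · rw [dif_neg hc1]
        by_cases hc2 : (t : ℕ) < (s : ℕ) ∧ ¬ sameBlk c m (t : ℕ) (s : ℕ)
        · rw [dif_pos hc2]
          refine Pi.single_eq_of_ne (fun hh => h2 ?_) _
          have := congrArg Subtype.val hh
          have h3 : t = q1 ∧ s = q2 := by simpa [Prod.ext_iff] using this
          exact ⟨h3.2, h3.1⟩
        · rw [dif_neg hc2]

lemma mul_symOf_single_mul (A B : Matrix (Fin n) (Fin n) ℝ) (q : OffI n m c) (a b : Fin n) :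
    (A * symOf (Pi.single q (1 : ℝ)) * B) a b
      = A a q.1.1 * B q.1.2 b + A a q.1.2 * B q.1.1 b := by
  rw [Matrix.mul_apply]
  have h1 : ∀ k, (A * symOf (Pi.single q (1 : ℝ))) a k
      = A a q.1.1 * (if k = q.1.2 then 1 else 0)
        + A a q.1.2 * (if k = q.1.1 then 1 else 0) := by
    intro k
    rw [Matrix.mul_apply]
    have h2 : ∀ l, A a l * symOf (Pi.single q (1 : ℝ)) l k
        = A a l * ((if l = q.1.1 ∧ k = q.1.2 then 1 else 0)
            + (if l = q.1.2 ∧ k = q.1.1 then 1 else 0)) :=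
      fun l => by rw [symOf_single_apply]
    simp only [h2, mul_add]
    rw [Finset.sum_add_distrib]
    congr 1
    · by_cases hk : k = q.1.2 <;>
        simp [hk, mul_ite, mul_one, mul_zero, Finset.sum_ite_eq', Finset.mem_univ]
    · by_cases hk : k = q.1.1 <;>
        simp [hk, mul_ite, mul_one, mul_zero, Finset.sum_ite_eq', Finset.mem_univ]
  simp only [h1, add_mul, ite_mul, one_mul, zero_mul, mul_ite, mul_one, mul_zero]
  rw [Finset.sum_add_distrib]
  congr 1 <;> simp [Finset.sum_ite_eq', Finset.mem_univ]

lemma IsElem.eq_zero_right {i j : ℕ} {U : Matrix (Fin n) (Fin n) ℝ} (hU : IsElem c i j U)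
    {a b : Fin n} (ha : inPiv c i j (a : ℕ)) (hb : ¬ inPiv c i j (b : ℕ)) : U a b = 0 := by
  rw [hU a b (fun h => hb h.2)]
  refine if_neg (fun h => hb ?_)
  rw [← h]; exact ha

lemma IsElem.eq_zero_left {i j : ℕ} {U : Matrix (Fin n) (Fin n) ℝ} (hU : IsElem c i j U)
    {a b : Fin n} (ha : ¬ inPiv c i j (a : ℕ)) (hb : inPiv c i j (b : ℕ)) : U a b = 0 := by
  rw [hU a b (fun h => ha h.1)]
  refine if_neg (fun h => ha ?_)
  rw [h]; exact hb

lemma annih_transpose {i j : ℕ} {U : Matrix (Fin n) (Fin n) ℝ} (hU : IsElem c i j U) :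
    (annih n m c i j U).transpose = annih n m c i j U.transpose := by
  funext p q
  rw [Matrix.transpose_apply]
  unfold annih nij
  rw [Matrix.transpose_transpose, mul_symOf_single_mul, mul_symOf_single_mul]
  simp only [Matrix.transpose_apply]
  by_cases hp : inPiv c i j ((p.1.1 : Fin n) : ℕ) ∧ inPiv c i j ((p.1.2 : Fin n) : ℕ) <;>
    by_cases hq : inPiv c i j ((q.1.1 : Fin n) : ℕ) ∧ inPiv c i j ((q.1.2 : Fin n) : ℕ)
  · rw [if_pos hp, if_pos hq]
  · rw [if_neg hq, if_pos hp]
    rcases not_and_or.mp hq with h | h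
    · rw [hU.eq_zero_right hp.1 h, hU.eq_zero_right hp.2 h]; ring
    · rw [hU.eq_zero_right hp.2 h, hU.eq_zero_right hp.1 h]; ring
  · rw [if_pos hq, if_neg hp]
    rcases not_and_or.mp hp with h | h
    · rw [hU.eq_zero_left h hq.1, hU.eq_zero_left h hq.2]; ring
    · rw [hU.eq_zero_left h hq.2, hU.eq_zero_left h hq.1]; ring
  · rw [if_neg hp, if_neg hq]; ring

lemma IijUBC_transpose {ρ : ℝ} {i j : ℕ} {R : Matrix (OffI n m c) (OffI n m c) ℝ}
    (hR : R ∈ IijUBC n m c ρ i j) : R.transpose ∈ IijUBC n m c ρ i j := by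
  obtain ⟨U, hU, rfl⟩ := hR
  exact ⟨U.transpose, hU.transpose, annih_transpose (m := m) hU.1⟩

lemma JopUBC_rev {ρ : ℝ} {L : List (ℕ × ℕ)} {J : Matrix (OffI n m c) (OffI n m c) ℝ}
    (hJ : J ∈ JopUBC n m c ρ L.reverse) : J.transpose ∈ JopUBC n m c ρ L := by
  obtain ⟨R, hR, rfl⟩ := hJ
  refine ⟨fun k => (R (L.length - 1 - k)).transpose, ?_, ?_⟩
  · intro k hk
    have hk' : L.length - 1 - k < L.reverse.length := by
      rw [List.length_reverse]; omega
    have hmem := hR (L.length - 1 - k) hk'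
    have hpair : L.reverse.get ⟨L.length - 1 - k, hk'⟩ = L.get ⟨k, hk⟩ := by
      simp only [List.get_eq_getElem, List.getElem_reverse]
      congr 1
      omega
    rw [hpair] at hmem
    exact IijUBC_transpose hmem
  · rw [Matrix.transpose_list_prod]
    congr 1
    apply List.ext_getElem
    · simp
    · intro k h1 h2
      simp only [List.getElem_reverse, List.getElem_map, List.getElem_range,
        List.length_reverse, List.length_map, List.length_range] at *

end Annih

/-- Proposition 2.17: a uniform spectral norm bound for the block Jacobi
operators of `O` transfers to the block Jacobi operators of the reverse ordering `O^←`;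
the same holds for the spectral radius. -/
theorem statement18 (n m : ℕ) (c : ℕ → ℕ) (hpart : IsPartition n m c)
    (ρ : ℝ) (hρ0 : 0 < ρ) (hρ1 : ρ ≤ 1)
    (L : List (ℕ × ℕ)) (hL : SeqOn m L) (μ : ℝ) :
    ((∀ J ∈ JopUBC n m c ρ L, specNorm J ≤ μ) →
      ∀ J ∈ JopUBC n m c ρ L.reverse, specNorm J ≤ μ) ∧
    ((∀ J ∈ JopUBC n m c ρ L, specRad J ≤ μ) →
      ∀ J ∈ JopUBC n m c ρ L.reverse, specRad J ≤ μ) := by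
  constructor
  · intro H J hJ
    have h1 := H _ (JopUBC_rev hJ)
    have h3 : specNorm J ≤ specNorm J.transpose := by
      have := specNorm_transpose_le J.transpose
      rwa [Matrix.transpose_transpose] at this
    linarith
  · intro H J hJ
    have h1 := H _ (JopUBC_rev hJ)
    have h3 : specRad J = specRad J.transpose := by
      rw [specRad_eq_sSup_RS, specRad_eq_sSup_RS, RS_transpose]
    linarith
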